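/- arXiv:1509.08068 — 3 statements merged into one kernel-verified Lean document; each statement's English description precedes it below -/
import Mathlib

section
/- In the incremental grammar G*, for each incremental category Cⱼ, the string w#ⱼ is derivable from Cⱼ in G* if and only if w is derivable from Cⱼ in G, for every w ∈ T*. -/
open scoped Classical

/-- Map a symbol along a map of terminal alphabets. -/
def liftSymbol {T T' N : Type} (f : T → T') : Symbol T N → Symbol T' N
  | .terminal t => .terminal (f t)
  | .nonterminal n => .nonterminal n

/-- Map a rule along a map of terminal alphabets. -/
def liftRule {T T' N : Type} (f : T → T') (r : ContextFreeRule T N) :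
    ContextFreeRule T' N :=
  ⟨r.input, r.output.map (liftSymbol f)⟩

/-- The incremental grammar `G*`: the terminal alphabet is enlarged to `T ⊕ J`, where `J`
indexes the incremental categories `C j`, the fresh end-of-string marker `#ⱼ` is `Sum.inr j`,
and for each `j` the production `C j → C j #ⱼ` is added. -/
noncomputable def incrementalGrammar {T : Type} (g : ContextFreeGrammar T)
    (J : Type) [Fintype J] (C : J → g.NT) : ContextFreeGrammar (T ⊕ J) where
  NT := g.NT
  initial := g.initial
  rules :=
    g.rules.image (liftRule Sum.inl) ∪
      Finset.univ.image (fun j : J =>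
        (⟨C j, [Symbol.nonterminal (C j), Symbol.terminal (Sum.inr j)]⟩ :
          ContextFreeRule (T ⊕ J) g.NT))

/-- Erase end-of-string markers and project terminals back to `T`. -/
def eraseSymbol {T J N : Type} : Symbol (T ⊕ J) N → Option (Symbol T N)
  | .terminal (Sum.inl t) => some (.terminal t)
  | .terminal (Sum.inr _) => none
  | .nonterminal n => some (.nonterminal n)

def eraseStr {T J N : Type} (s : List (Symbol (T ⊕ J) N)) : List (Symbol T N) :=
  s.filterMap eraseSymbol

lemma eraseStr_append {T J N : Type} (s t : List (Symbol (T ⊕ J) N)) :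
    eraseStr (s ++ t) = eraseStr s ++ eraseStr t := List.filterMap_append

lemma eraseStr_lift {T J N : Type} (s : List (Symbol T N)) :
    eraseStr (s.map (liftSymbol (Sum.inl : T → T ⊕ J))) = s := by
  induction s with
  | nil => rfl
  | cons a s ih => cases a <;> simp [eraseStr, liftSymbol, eraseSymbol] at * <;> exact ih

lemma erase_produces {T : Type} (g : ContextFreeGrammar T)
    (J : Type) [Fintype J] (C : J → g.NT) {u v : List (Symbol (T ⊕ J) g.NT)}
    (h : (incrementalGrammar g J C).Produces u v) :
    g.Derives (eraseStr u) (eraseStr v) := by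
  obtain ⟨r, hr, hruv⟩ := h
  obtain ⟨p, q, rfl, rfl⟩ := hruv.exists_parts
  rcases (Finset.mem_union.mp hr).imp Finset.mem_image.mp Finset.mem_image.mp with ⟨r0, hr0, rfl⟩ | ⟨j, -, rfl⟩
  · refine ContextFreeGrammar.Produces.single ⟨r0, hr0, ?_⟩
    erw [eraseStr_append, eraseStr_append, eraseStr_append, eraseStr_append]
    have h1 : eraseStr ([Symbol.nonterminal (liftRule (Sum.inl : T → T ⊕ J) r0).input] :
        List (Symbol (T ⊕ J) g.NT)) = [Symbol.nonterminal r0.input] := rfl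
    have h2 : eraseStr ((liftRule (Sum.inl : T → T ⊕ J) r0).output) = r0.output :=
      eraseStr_lift _
    erw [h1, h2]
    exact ContextFreeRule.rewrites_of_exists_parts r0 _ _
  · erw [eraseStr_append, eraseStr_append, eraseStr_append, eraseStr_append]
    simp only [eraseStr, eraseSymbol, List.filterMap]
    rfl

lemma lift_derives {T : Type} (g : ContextFreeGrammar T)
    (J : Type) [Fintype J] (C : J → g.NT) {u v : List (Symbol T g.NT)}
    (h : g.Derives u v) :
    (incrementalGrammar g J C).Derives (u.map (liftSymbol Sum.inl)) (v.map (liftSymbol Sum.inl)) := by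
  induction h with
  | refl => rfl
  | tail _ last ih =>
    refine ih.trans_produces ?_
    obtain ⟨r, hr, hruv⟩ := last
    obtain ⟨p, q, rfl, rfl⟩ := hruv.exists_parts
    refine ⟨liftRule Sum.inl r, ?_, ?_⟩
    · exact Finset.mem_union_left _ (Finset.mem_image_of_mem _ hr)
    · erw [List.map_append, List.map_append, List.map_append, List.map_append]
      exact ContextFreeRule.rewrites_of_exists_parts _ _ _

/-- For each incremental category `Cⱼ`: `Cⱼ ⇒*_{G*} w#ⱼ` iff `Cⱼ ⇒*_G w`, for `w ∈ T*`. -/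
theorem incrementalGrammar_derives_eos {T : Type} (g : ContextFreeGrammar T)
    (J : Type) [Fintype J] (C : J → g.NT) (j : J) (w : List T) :
    (incrementalGrammar g J C).Derives [Symbol.nonterminal (C j)]
        ((w.map fun t => Symbol.terminal (Sum.inl t)) ++ [Symbol.terminal (Sum.inr j)]) ↔
      g.Derives [Symbol.nonterminal (C j)] (w.map Symbol.terminal) := by
  constructor
  · intro h
    have key : ∀ u v : List (Symbol (T ⊕ J) g.NT),
        (incrementalGrammar g J C).Derives u v → g.Derives (eraseStr u) (eraseStr v) := by
      intro u v huv
      induction huv with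
      | refl => rfl
      | tail _ last ih => exact ih.trans (erase_produces g J C last)
    have := key _ _ h
    have h1 : eraseStr ([Symbol.nonterminal (C j)] : List (Symbol (T ⊕ J) g.NT)) =
        [Symbol.nonterminal (C j)] := rfl
    have h2 : eraseStr ((w.map fun t => Symbol.terminal (Sum.inl t)) ++
        ([Symbol.terminal (Sum.inr j)] : List (Symbol (T ⊕ J) g.NT))) = w.map Symbol.terminal := by
      rw [eraseStr_append]
      have : (w.map fun t => (Symbol.terminal (Sum.inl t) : Symbol (T ⊕ J) g.NT)) =
          (w.map Symbol.terminal).map (liftSymbol Sum.inl) := by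
        simp [liftSymbol, Function.comp]
      rw [this, eraseStr_lift]
      simp [eraseStr, eraseSymbol]
    erw [h1, h2] at this; exact this
  · intro h
    have step1 : (incrementalGrammar g J C).Produces [Symbol.nonterminal (C j)]
        [Symbol.nonterminal (C j), Symbol.terminal (Sum.inr j)] := by
      refine ⟨⟨C j, [Symbol.nonterminal (C j), Symbol.terminal (Sum.inr j)]⟩, ?_, ?_⟩
      · exact Finset.mem_union_right _ (Finset.mem_image_of_mem _ (Finset.mem_univ j))
      · simpa using ContextFreeRule.Rewrites.head []
    have step2 := (lift_derives g J C h).append_right [Symbol.terminal (Sum.inr j)]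
    refine step1.trans_derives ?_
    have e1 : ([Symbol.nonterminal (C j)] : List (Symbol T g.NT)).map
        (liftSymbol (Sum.inl : T → T ⊕ J)) = [Symbol.nonterminal (C j)] := rfl
    have e2 : ((w.map Symbol.terminal : List (Symbol T g.NT)).map
        (liftSymbol (Sum.inl : T → T ⊕ J))) = w.map fun t => Symbol.terminal (Sum.inl t) := by
      simp [liftSymbol, Function.comp]
    erw [e1, e2] at step2
    exact step2
end

section
/- If B ∈ FIRSTNT(A) (via the inductive computation rules), then there exist sentential forms witnessing a leftmost derivation A ⇒* Bβ; i.e., the inductive characterization of FIRSTNT (place Bᵢ and FIRSTNT(Bᵢ) in FIRSTNT(A) when A → B₁...Bₖ and B₁...B_{i-1} ⇒* ε) is sound with respect to the derivation-based definition. -/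
/-- Derivation-based definition of FIRSTNT: nonterminals `B` with `A ⇒* Bβ`
(via a nontrivial derivation). -/
def FIRSTNT {T : Type} (g : ContextFreeGrammar T) (A : g.NT) : Set g.NT :=
  {B | ∃ β : List (Symbol T g.NT),
    Relation.TransGen g.Produces [Symbol.nonterminal A] (Symbol.nonterminal B :: β)}

/-- The least relation closed under the inductive computation rules for FIRSTNT:
if `A → X₁...Xₖ` is a production, `X₁...X_{i-1} ⇒* ε`, and `Xᵢ` is a nonterminal `B`,
then `B ∈ firstnt(A)`, and `firstnt(B) ⊆ firstnt(A)`. -/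
inductive firstnt {T : Type} (g : ContextFreeGrammar T) : g.NT → g.NT → Prop
  | rule (r : ContextFreeRule T g.NT) (hr : r ∈ g.rules)
      (i : ℕ) (hi : i < r.output.length) (B : g.NT)
      (hB : r.output.get ⟨i, hi⟩ = Symbol.nonterminal B)
      (hε : g.Derives (r.output.take i) []) :
      firstnt g r.input B
  | sub (r : ContextFreeRule T g.NT) (hr : r ∈ g.rules)
      (i : ℕ) (hi : i < r.output.length) (B B' : g.NT)
      (hB : r.output.get ⟨i, hi⟩ = Symbol.nonterminal B)
      (hε : g.Derives (r.output.take i) [])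
      (hB' : firstnt g B B') :
      firstnt g r.input B'

lemma transGen_append_right {T : Type} (g : ContextFreeGrammar T)
    {u v : List (Symbol T g.NT)} (h : Relation.TransGen g.Produces u v)
    (p : List (Symbol T g.NT)) :
    Relation.TransGen g.Produces (u ++ p) (v ++ p) := by
  induction h with
  | single h => exact Relation.TransGen.single (h.append_right p)
  | tail _ h ih => exact ih.tail (h.append_right p)

lemma firstnt_step {T : Type} (g : ContextFreeGrammar T)
    (r : ContextFreeRule T g.NT) (hr : r ∈ g.rules)
    (i : ℕ) (hi : i < r.output.length) (B : g.NT)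
    (hB : r.output.get ⟨i, hi⟩ = Symbol.nonterminal B)
    (hε : g.Derives (r.output.take i) []) :
    Relation.TransGen g.Produces [Symbol.nonterminal r.input]
      (Symbol.nonterminal B :: r.output.drop (i + 1)) := by
  have h1 : g.Produces [Symbol.nonterminal r.input] r.output :=
    ⟨r, hr, ContextFreeRule.Rewrites.input_output⟩
  have hsplit : r.output = r.output.take i ++ Symbol.nonterminal B :: r.output.drop (i + 1) := by
    conv_lhs => rw [← List.take_append_drop i r.output]
    congr 1
    rw [List.drop_eq_getElem_cons hi, ← hB]; rw [List.get_eq_getElem]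
  rw [hsplit] at h1
  have h2 : g.Derives (r.output.take i ++ Symbol.nonterminal B :: r.output.drop (i + 1))
      (Symbol.nonterminal B :: r.output.drop (i + 1)) := by
    simpa using (hε.append_right (Symbol.nonterminal B :: r.output.drop (i + 1)))
  exact Relation.TransGen.head' h1 h2

/-- Soundness: the inductive computation of FIRSTNT is contained in the
derivation-based FIRSTNT. -/
theorem firstnt_sound {T : Type} (g : ContextFreeGrammar T) (A B : g.NT)
    (h : firstnt g A B) : B ∈ FIRSTNT g A := by
  induction h with
  | rule r hr i hi B hB hε =>
      exact ⟨_, firstnt_step g r hr i hi B hB hε⟩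
  | sub r hr i hi B B' hB hε _ ih =>
      obtain ⟨β, hβ⟩ := ih
      refine ⟨β ++ r.output.drop (i + 1), ?_⟩
      have h1 := firstnt_step g r hr i hi B hB hε
      have h2 := transGen_append_right g hβ (r.output.drop (i + 1))
      simpa using h1.trans h2
end

section
/- The inductive computation of FIRSTNT is also complete: if A ⇒* Bβ for a nonterminal B, then B is in the least set closed under the rules: for A → X₁...Xₖ ∈ P with X₁...X_{i-1} ⇒* ε and Xᵢ ∈ N, Xᵢ ∈ firstnt(A) and firstnt(Xᵢ) ⊆ firstnt(A). -/
lemma rewrites_split {T N : Type*} {r : ContextFreeRule T N} :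
    ∀ {u v w : List (Symbol T N)}, r.Rewrites (u ++ v) w →
    (∃ w1, w = w1 ++ v ∧ r.Rewrites u w1) ∨ (∃ w2, w = u ++ w2 ∧ r.Rewrites v w2) := by
  intro u
  induction u with
  | nil => intro v w h; right; exact ⟨w, rfl, h⟩
  | cons a u ih =>
    intro v w h
    cases h with
    | head s =>
      left
      exact ⟨r.output ++ u, by simp, ContextFreeRule.Rewrites.head u⟩
    | cons y h =>
      rcases ih h with ⟨w1, rfl, hw1⟩ | ⟨w2, rfl, hw2⟩
      · exact Or.inl ⟨a :: w1, rfl, hw1.cons a⟩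
      · exact Or.inr ⟨w2, rfl, hw2⟩

lemma derives_split {T : Type} {g : ContextFreeGrammar T} :
    ∀ {u v w : List (Symbol T g.NT)}, g.Derives (u ++ v) w →
    ∃ w1 w2, w = w1 ++ w2 ∧ g.Derives u w1 ∧ g.Derives v w2 := by
  intro u v w h
  generalize hα : u ++ v = α at h
  induction h using Relation.ReflTransGen.head_induction_on generalizing u v with
  | refl =>
    exact ⟨u, v, hα.symm, Relation.ReflTransGen.refl, Relation.ReflTransGen.refl⟩
  | head hp _ ih =>
    subst hα
    obtain ⟨r, hr, hrw⟩ := hp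
    rcases rewrites_split hrw with ⟨w1, rfl, hw1⟩ | ⟨w2, rfl, hw2⟩
    · obtain ⟨z1, z2, rfl, h1, h2⟩ := ih rfl
      exact ⟨z1, z2, rfl, Relation.ReflTransGen.head ⟨r, hr, hw1⟩ h1, h2⟩
    · obtain ⟨z1, z2, rfl, h1, h2⟩ := ih rfl
      exact ⟨z1, z2, rfl, h1, Relation.ReflTransGen.head ⟨r, hr, hw2⟩ h2⟩

lemma derives_nil_split {T : Type} {g : ContextFreeGrammar T} {u v : List (Symbol T g.NT)}
    (h : g.Derives (u ++ v) []) : g.Derives u [] ∧ g.Derives v [] := by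
  obtain ⟨w1, w2, he, h1, h2⟩ := derives_split h
  rw [List.nil_eq, List.append_eq_nil_iff] at he
  obtain ⟨rfl, rfl⟩ := he
  exact ⟨h1, h2⟩

/-- If the output has a nonterminal `C` at position `i` preceded by symbols deriving ε,
then `firstnt r.input B` whenever `C = B ∨ firstnt C B`. -/
lemma firstnt_of_output {T : Type} {g : ContextFreeGrammar T} {r : ContextFreeRule T g.NT}
    (hr : r ∈ g.rules) {γ δ : List (Symbol T g.NT)} {C B : g.NT}
    (ho : r.output = γ ++ Symbol.nonterminal C :: δ)
    (hγ : g.Derives γ []) (hQ : C = B ∨ firstnt g C B) : firstnt g r.input B := by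
  have hi : γ.length < r.output.length := by rw [ho]; simp
  have hget : r.output.get ⟨γ.length, hi⟩ = Symbol.nonterminal C := by
    simp [ho, List.get_eq_getElem, List.getElem_append_right]
  have htake : r.output.take γ.length = γ := by
    rw [ho]; exact List.take_left
  rcases hQ with rfl | hQ
  · exact firstnt.rule r hr γ.length hi _ hget (htake.symm ▸ hγ)
  · exact firstnt.sub r hr γ.length hi C B hget (htake.symm ▸ hγ) hQ

lemma firstnt_step_s15 {T : Type} {g : ContextFreeGrammar T} {r : ContextFreeRule T g.NT}
    (hr : r ∈ g.rules) {B : g.NT} :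
    ∀ {α α' : List (Symbol T g.NT)}, r.Rewrites α α' →
    ∀ γ : List (Symbol T g.NT), ∀ C : g.NT, ∀ δ : List (Symbol T g.NT), α' = γ ++ Symbol.nonterminal C :: δ → g.Derives γ [] →
    (C = B ∨ firstnt g C B) →
    ∃ γ' : List (Symbol T g.NT), ∃ C' : g.NT, ∃ δ' : List (Symbol T g.NT), α = γ' ++ Symbol.nonterminal C' :: δ' ∧ g.Derives γ' [] ∧
      (C' = B ∨ firstnt g C' B) := by
  intro α α' hrw
  induction hrw with
  | head s =>
    intro γ C δ heq hγ hQ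
    rcases List.append_eq_append_iff.mp heq.symm with ⟨a', ha1, ha2⟩ | ⟨c', hc1, hc2⟩
    · -- r.output = γ ++ a', nt C :: δ = a' ++ s
      cases a' with
      | nil =>
        -- γ = r.output, s = nt C :: δ
        simp at ha1 ha2
        refine ⟨[Symbol.nonterminal r.input], C, δ, by simp [← ha2], ?_, hQ⟩
        exact (ContextFreeGrammar.Produces.single
          ⟨r, hr, by simpa using ContextFreeRule.Rewrites.input_output⟩).trans (ha1 ▸ hγ)
      | cons x a'' =>
        obtain ⟨rfl, rfl⟩ : Symbol.nonterminal C = x ∧ δ = a'' ++ s := by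
          simpa using ha2
        refine ⟨[], r.input, s, rfl, Relation.ReflTransGen.refl, Or.inr ?_⟩
        exact firstnt_of_output hr (by rw [ha1]) hγ hQ
    · -- γ = r.output ++ c', s = c' ++ nt C :: δ
      obtain ⟨h1, h2⟩ := derives_nil_split (hc1 ▸ hγ)
      refine ⟨Symbol.nonterminal r.input :: c', C, δ, by simp [hc2], ?_, hQ⟩
      have : g.Produces (Symbol.nonterminal r.input :: c') (r.output ++ c') :=
        ⟨r, hr, ContextFreeRule.Rewrites.head c'⟩
      exact this.trans_derives ((h1.append_right c').trans (by simpa using h2))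
  | cons y hrw ih =>
    rename_i s₁ s₂
    intro γ C δ heq hγ hQ
    cases γ with
    | nil =>
      simp at heq
      exact ⟨[], C, s₁, by simp [heq.1], Relation.ReflTransGen.refl, hQ⟩
    | cons z γ₁ =>
      obtain ⟨rfl, heq2⟩ : y = z ∧ s₂ = γ₁ ++ Symbol.nonterminal C :: δ := by
        simpa using heq
      obtain ⟨hz, hγ₁⟩ := derives_nil_split (u := [y]) (by simpa using hγ)
      obtain ⟨γ'', C', δ'', rfl, h1, h2⟩ := ih γ₁ C δ heq2 hγ₁ hQ
      refine ⟨y :: γ'', C', δ'', rfl, ?_, h2⟩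
      exact ((hz.append_right γ'').trans (by simpa using h1) : g.Derives ([y] ++ γ'') [])

lemma firstnt_key {T : Type} {g : ContextFreeGrammar T} {B : g.NT} :
    ∀ {α β : List (Symbol T g.NT)}, g.Derives α (Symbol.nonterminal B :: β) →
    ∃ γ : List (Symbol T g.NT), ∃ C : g.NT, ∃ δ : List (Symbol T g.NT), α = γ ++ Symbol.nonterminal C :: δ ∧ g.Derives γ [] ∧
      (C = B ∨ firstnt g C B) := by
  intro α β h
  generalize hw : Symbol.nonterminal B :: β = w at h
  induction h using Relation.ReflTransGen.head_induction_on generalizing β with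
  | refl =>
    exact ⟨[], B, β, by simp [← hw], Relation.ReflTransGen.refl, Or.inl rfl⟩
  | head hp _ ih =>
    obtain ⟨γ, C, δ, heq, hγ, hQ⟩ := ih hw
    obtain ⟨r, hr, hrw⟩ := hp
    exact firstnt_step_s15 hr hrw γ C δ heq hγ hQ

/-- Completeness: if `A ⇒* Bβ` (nontrivially) for a nonterminal `B`, then `B` is in the
least set computed by the inductive FIRSTNT rules. -/
theorem firstnt_complete {T : Type} (g : ContextFreeGrammar T) (A B : g.NT)
    (β : List (Symbol T g.NT))
    (h : Relation.TransGen g.Produces [Symbol.nonterminal A]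
      (Symbol.nonterminal B :: β)) : firstnt g A B := by
  obtain ⟨w, h1, h2⟩ := Relation.TransGen.head'_iff.mp h
  obtain ⟨r, hr, hrw⟩ := h1
  cases hrw with
  | head s =>
    rw [List.append_nil] at h2
    obtain ⟨γ, C, δ, heq, hγ, hQ⟩ := firstnt_key h2
    exact firstnt_of_output hr heq hγ hQ
  | cons y hrw' => cases hrw'
end
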